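/- Assume a(i,i) = 2 for all i ∈ I. Let ν ∈ I^n be block-constant: ν_k = ν^i whenever c_{i−1} < k ≤ c_i, where ν^1,…,ν^p ∈ I satisfy ν^j ≠ ν^{j+1} for all 1 ≤ j < p. Let d ∈ D(ν), i.e. d ∈ S_n is strictly increasing on each block {c_{i−1}+1,…,c_i} and dν = ν. Let w = w_1 ∘ w_2 ∘ ⋯ ∘ w_p where each w_j ∈ S_n permutes only the block {c_{j−1}+1,…,c_j}. Then for every 1 ≤ i ≤ p and every k with c_{i−1} < k ≤ c_i: N(d∘w, ν, k) = N(d, ν, w_i(k)) − 2·|J̃_{w_i}^{<k}| + 2·(w_i(k) − c_{i−1} − 1), where J̃_{w_i}^{<k} := {c_{i−1}+1 ≤ a' < k : w_i(a') < w_i(k)}. In particular, N(d∘w, ν, k) does not depend on w_j for j ≠ i. -/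

import Mathlib

/-- `N(w,ν,t) = L(ν_t) − Σ_{j ∈ J_w^{<t}} a(ν_t, ν_j)`, where
`J_w^{<t} = {j < t : w(j) < w(t)}`. -/
def Nfun {I : Type*} (a : I → I → ℤ) (L : I → ℤ) {n : ℕ}
    (w : Equiv.Perm (Fin n)) (ν : Fin n → I) (t : Fin n) : ℤ :=
  L (ν t) - ∑ j ∈ Finset.univ.filter (fun j => j < t ∧ w j < w t), a (ν t) (ν j)

/-- Lemma 3.7 of the paper: for block-constant `ν` (blocks `[c_i, c_{i+1})`, 0-based,
adjacent block values distinct), `d ∈ D(ν)` (strictly increasing on each block, `dν = ν`)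
and `w = w_1 ∘ ⋯ ∘ w_p` with `w_j` supported on block `j`, one has, for `k` in block `i`,
`N(d∘w, ν, k) = N(d, ν, w_i(k)) − 2|J̃_{w_i}^{<k}| + 2(w_i(k) − c_i)`. -/
theorem stmt3 {I : Type*} (a : I → I → ℤ) (L : I → ℤ)
    (ha : ∀ i, a i i = 2)
    (n p : ℕ) (b : ℕ → ℕ) (hbpos : ∀ i < p, 0 < b i)
    (c : ℕ → ℕ) (hc : ∀ i, c i = ∑ j ∈ Finset.range i, b j) (hcp : c p = n)
    (nb : ℕ → I) (hadj : ∀ i, i + 1 < p → nb i ≠ nb (i + 1))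
    (ν : Fin n → I)
    (hν : ∀ i < p, ∀ k : Fin n, c i ≤ (k : ℕ) → (k : ℕ) < c (i + 1) → ν k = nb i)
    (d : Equiv.Perm (Fin n))
    (hdinc : ∀ i < p, ∀ k l : Fin n,
      c i ≤ (k : ℕ) → k < l → (l : ℕ) < c (i + 1) → d k < d l)
    (hdν : ∀ k, ν (d⁻¹ k) = ν k)
    (W : ℕ → Equiv.Perm (Fin n))
    (hW : ∀ j < p, ∀ k : Fin n, ((k : ℕ) < c j ∨ c (j + 1) ≤ (k : ℕ)) → W j k = k)
    (w : Equiv.Perm (Fin n)) (hw : w = ((List.range p).map W).prod)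
    (i : ℕ) (hi : i < p) (k : Fin n) (hk1 : c i ≤ (k : ℕ)) (hk2 : (k : ℕ) < c (i + 1)) :
    Nfun a L (d * w) ν k
      = Nfun a L d ν (W i k)
        - 2 * ((Finset.univ.filter
            (fun a' : Fin n => c i ≤ (a' : ℕ) ∧ a' < k ∧ W i a' < W i k)).card : ℤ)
        + 2 * (((W i k : Fin n) : ℤ) - (c i : ℤ)) := by
  classical
  have hcmono : Monotone c := fun x y hxy => by
    rw [hc, hc]
    exact Finset.sum_le_sum_of_subset (Finset.range_subset_range.2 hxy)
  have hc0 : c 0 = 0 := by simp [hc]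
  -- every index lies in a block
  have hblock : ∀ x : Fin n, ∃ j, j < p ∧ c j ≤ (x : ℕ) ∧ (x : ℕ) < c (j + 1) := by
    intro x
    by_contra hcon
    push_neg at hcon
    have key : ∀ j, j ≤ p → c j ≤ (x : ℕ) := by
      intro j hj
      induction j with
      | zero => omega
      | succ mm ih =>
        have h1 : c mm ≤ (x : ℕ) := ih (by omega)
        have h2 := hcon mm (by omega) h1
        omega
    have hp' := key p le_rfl
    rw [hcp] at hp'
    exact absurd x.isLt (by omega)
  -- `W j` preserves block `j`
  have hWblock : ∀ j, j < p → ∀ x : Fin n, c j ≤ (x : ℕ) → (x : ℕ) < c (j + 1) →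
      c j ≤ ((W j x : Fin n) : ℕ) ∧ ((W j x : Fin n) : ℕ) < c (j + 1) := by
    intro j hj x hx1 hx2
    by_contra hcon
    have h1 : ((W j x : Fin n) : ℕ) < c j ∨ c (j + 1) ≤ ((W j x : Fin n) : ℕ) := by omega
    have h2 := hW j hj (W j x) h1
    have h3 := (W j).injective h2
    have h4 : ((W j x : Fin n) : ℕ) = (x : ℕ) := by rw [h3]
    omega
  -- the product over `range m` fixes points at or above `c m`
  have hprod_fix : ∀ m, m ≤ p → ∀ x : Fin n, c m ≤ (x : ℕ) →
      (((List.range m).map W).prod) x = x := by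
    intro m
    induction m with
    | zero => intro _ x _; simp
    | succ mm ih =>
      intro hm x hx
      rw [List.range_succ, List.map_append, List.prod_append]
      simp only [List.map_cons, List.map_nil, List.prod_cons, List.prod_nil, mul_one,
        Equiv.Perm.mul_apply]
      have hle : c mm ≤ (x : ℕ) := le_trans (hcmono (Nat.le_succ mm)) hx
      have h1 : W mm x = x := hW mm (by omega) x (Or.inr hx)
      rw [h1]
      exact ih (by omega) x hle
  -- `w` acts as `W i'` on block `i'`
  have hwblock : ∀ i', i' < p → ∀ x : Fin n, c i' ≤ (x : ℕ) → (x : ℕ) < c (i' + 1) →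
      w x = W i' x := by
    intro i' hi' x hx1 hx2
    have key : ∀ m, i' < m → m ≤ p → (((List.range m).map W).prod) x = W i' x := by
      intro m
      induction m with
      | zero => intro h _; exact absurd h (by omega)
      | succ mm ih =>
        intro h1 h2
        rw [List.range_succ, List.map_append, List.prod_append]
        simp only [List.map_cons, List.map_nil, List.prod_cons, List.prod_nil, mul_one,
          Equiv.Perm.mul_apply]
        rcases Nat.lt_or_ge i' mm with h3 | h3
        · have h4 : W mm x = x := by
            refine hW mm (by omega) x (Or.inl ?_)
            exact lt_of_lt_of_le hx2 (hcmono h3)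
          rw [h4]
          exact ih h3 (by omega)
        · have h5 : i' = mm := by omega
          subst h5
          exact hprod_fix i' (by omega) (W i' x) (hWblock i' hi' x hx1 hx2).1
    rw [hw]
    exact key p hi' le_rfl
  -- `d` strictly increasing iff on blocks
  have hdiff : ∀ i', i' < p → ∀ x y : Fin n, c i' ≤ (x : ℕ) → (x : ℕ) < c (i' + 1) →
      c i' ≤ (y : ℕ) → (y : ℕ) < c (i' + 1) → (d x < d y ↔ x < y) := by
    intro i' hi' x y hx1 hx2 hy1 hy2
    constructor
    · intro h
      by_contra hcon
      rcases lt_or_eq_of_le (not_lt.1 hcon) with h' | h'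
      · exact absurd h (not_lt.2 (le_of_lt (hdinc i' hi' y x hy1 h' hx2)))
      · rw [h'] at h; exact lt_irrefl _ h
    · intro h
      exact hdinc i' hi' x y hx1 h hy2
  -- `w` and `w⁻¹` preserve lower parts
  have hwlt : ∀ q, ∀ x : Fin n, (x : ℕ) < c q → ((w x : Fin n) : ℕ) < c q := by
    intro q x hx
    obtain ⟨j', hj', h1, h2⟩ := hblock x
    have hj'q : j' < q := by
      by_contra hcon
      have := hcmono (not_lt.1 hcon)
      omega
    have hb := (hWblock j' hj' x h1 h2).2
    rw [hwblock j' hj' x h1 h2]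
    have hle : c (j' + 1) ≤ c q := hcmono hj'q
    omega
  have hwinvlt : ∀ q, ∀ x : Fin n, (x : ℕ) < c q → ((w⁻¹ x : Fin n) : ℕ) < c q := by
    intro q x hx
    obtain ⟨j', hj', h1, h2⟩ := hblock (w⁻¹ x)
    have hx' : w (w⁻¹ x) = x := (Equiv.apply_symm_apply w x : w (w⁻¹ x) = x)
    have hb := hWblock j' hj' _ h1 h2
    rw [hwblock j' hj' _ h1 h2] at hx'
    rw [hx'] at hb
    have hj'q : j' < q := by
      by_contra hcon
      have := hcmono (not_lt.1 hcon)
      omega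
    have hle : c (j' + 1) ≤ c q := hcmono hj'q
    omega
  have hνw : ∀ x : Fin n, ν (w x) = ν x := by
    intro x
    obtain ⟨j', hj', h1, h2⟩ := hblock x
    have hb := hWblock j' hj' x h1 h2
    rw [hwblock j' hj' x h1 h2, hν j' hj' _ hb.1 hb.2, hν j' hj' x h1 h2]
  have hWik := hWblock i hi k hk1 hk2
  have hwk : w k = W i k := hwblock i hi k hk1 hk2
  have hνk : ν k = nb i := hν i hi k hk1 hk2
  have hνWk : ν (W i k) = nb i := hν i hi _ hWik.1 hWik.2
  -- the two sums, split into low (`< c i`) and high (block `i`) parts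
  have hsplit1 := (Finset.sum_filter_add_sum_filter_not
    (Finset.univ.filter (fun j : Fin n => j < k ∧ (d * w) j < (d * w) k))
    (fun j => (j : ℕ) < c i) (fun j => a (nb i) (ν j))).symm
  have hsplit2 := (Finset.sum_filter_add_sum_filter_not
    (Finset.univ.filter (fun j : Fin n => j < W i k ∧ d j < d (W i k)))
    (fun j => (j : ℕ) < c i) (fun j => a (nb i) (ν j))).symm
  -- low parts are equal via the bijection `w`
  have hlow : ∑ j ∈ (Finset.univ.filter
        (fun j : Fin n => j < k ∧ (d * w) j < (d * w) k)).filter (fun j : Fin n => (j : ℕ) < c i),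
        a (nb i) (ν j)
      = ∑ j ∈ (Finset.univ.filter
        (fun j : Fin n => j < W i k ∧ d j < d (W i k))).filter (fun j : Fin n => (j : ℕ) < c i),
        a (nb i) (ν j) := by
    refine Finset.sum_bij' (fun j _ => w j) (fun j _ => w⁻¹ j) ?_ ?_ ?_ ?_ ?_
    · intro j hj
      simp only [Finset.mem_filter, Finset.mem_univ, true_and] at hj ⊢
      simp only [Equiv.Perm.mul_apply] at hj ⊢
      obtain ⟨⟨hjk, hd⟩, hlo⟩ := hj
      rw [hwk] at hd
      have hwlo : ((w j : Fin n) : ℕ) < c i := hwlt i j hlo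
      refine ⟨⟨Fin.lt_def.mpr (lt_of_lt_of_le hwlo hWik.1), hd⟩, hwlo⟩
    · intro j hj
      simp only [Finset.mem_filter, Finset.mem_univ, true_and] at hj ⊢
      simp only [Equiv.Perm.mul_apply] at hj ⊢
      obtain ⟨⟨hjk, hd⟩, hlo⟩ := hj
      have hwlo : ((w⁻¹ j : Fin n) : ℕ) < c i := hwinvlt i j hlo
      rw [hwk, show w (w⁻¹ j) = j from Equiv.apply_symm_apply w j]
      exact ⟨⟨Fin.lt_def.mpr (lt_of_lt_of_le hwlo hk1), hd⟩, hwlo⟩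
    · intro j _; exact (Equiv.symm_apply_apply w j : w⁻¹ (w j) = j)
    · intro j _; exact (Equiv.apply_symm_apply w j : w (w⁻¹ j) = j)
    · intro j _; rw [hνw j]
  -- high part of the first sum
  have hSeq : (Finset.univ.filter
        (fun j : Fin n => j < k ∧ (d * w) j < (d * w) k)).filter (fun j : Fin n => ¬ (j : ℕ) < c i)
      = Finset.univ.filter
        (fun a' : Fin n => c i ≤ (a' : ℕ) ∧ a' < k ∧ W i a' < W i k) := by
    ext j
    simp only [Finset.mem_filter, Finset.mem_univ, true_and, not_lt]
    simp only [Equiv.Perm.mul_apply]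
    constructor
    · rintro ⟨⟨hjk, hd⟩, hlo⟩
      have hjb : (j : ℕ) < c (i + 1) := lt_trans (Fin.lt_def.mp hjk) hk2
      have hwj : w j = W i j := hwblock i hi j hlo hjb
      rw [hwk, hwj] at hd
      have hbj := hWblock i hi j hlo hjb
      exact ⟨hlo, hjk, (hdiff i hi _ _ hbj.1 hbj.2 hWik.1 hWik.2).mp hd⟩
    · rintro ⟨hlo, hjk, hWlt⟩
      have hjb : (j : ℕ) < c (i + 1) := lt_trans (Fin.lt_def.mp hjk) hk2
      have hwj : w j = W i j := hwblock i hi j hlo hjb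
      have hbj := hWblock i hi j hlo hjb
      rw [hwk, hwj]
      exact ⟨⟨hjk, (hdiff i hi _ _ hbj.1 hbj.2 hWik.1 hWik.2).mpr hWlt⟩, hlo⟩
  have hSH : ∑ j ∈ (Finset.univ.filter
        (fun j : Fin n => j < k ∧ (d * w) j < (d * w) k)).filter (fun j : Fin n => ¬ (j : ℕ) < c i),
        a (nb i) (ν j)
      = 2 * ((Finset.univ.filter
        (fun a' : Fin n => c i ≤ (a' : ℕ) ∧ a' < k ∧ W i a' < W i k)).card : ℤ) := by
    rw [hSeq]
    rw [Finset.sum_congr rfl (fun j hj => ?_), Finset.sum_const, nsmul_eq_mul, mul_comm]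
    simp only [Finset.mem_filter, Finset.mem_univ, true_and] at hj
    have hjb : (j : ℕ) < c (i + 1) := lt_trans (Fin.lt_def.mp hj.2.1) hk2
    rw [hν i hi j hj.1 hjb, ha]
  -- high part of the second sum
  have hTeq : (Finset.univ.filter
        (fun j : Fin n => j < W i k ∧ d j < d (W i k))).filter (fun j : Fin n => ¬ (j : ℕ) < c i)
      = Finset.univ.filter
        (fun j : Fin n => c i ≤ (j : ℕ) ∧ (j : ℕ) < ((W i k : Fin n) : ℕ)) := by
    ext j
    simp only [Finset.mem_filter, Finset.mem_univ, true_and, not_lt]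
    constructor
    · rintro ⟨⟨hjk, _⟩, hlo⟩
      exact ⟨hlo, Fin.lt_def.mp hjk⟩
    · rintro ⟨hlo, hjm⟩
      have hjk : j < W i k := Fin.lt_def.mpr hjm
      have hjb : (j : ℕ) < c (i + 1) := lt_trans hjm hWik.2
      exact ⟨⟨hjk, (hdiff i hi j (W i k) hlo hjb hWik.1 hWik.2).mpr hjk⟩, hlo⟩
  have hcard2 : (Finset.univ.filter
        (fun j : Fin n => c i ≤ (j : ℕ) ∧ (j : ℕ) < ((W i k : Fin n) : ℕ))).card
      = ((W i k : Fin n) : ℕ) - c i := by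
    rw [← Nat.card_Ico (c i) ((W i k : Fin n) : ℕ)]
    refine Finset.card_bij' (fun (j : Fin n) _ => (j : ℕ))
      (fun x hx => (⟨x, ?_⟩ : Fin n)) ?_ ?_ ?_ ?_
    · exact lt_trans (Finset.mem_Ico.mp hx).2 (W i k).isLt
    · intro j hj
      simp only [Finset.mem_filter, Finset.mem_univ, true_and] at hj
      exact Finset.mem_Ico.mpr hj
    · intro x hx
      simp only [Finset.mem_filter, Finset.mem_univ, true_and]
      exact Finset.mem_Ico.mp hx
    · intro j _; rfl
    · intro x _; rfl
  have hTH : ∑ j ∈ (Finset.univ.filter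
        (fun j : Fin n => j < W i k ∧ d j < d (W i k))).filter (fun j : Fin n => ¬ (j : ℕ) < c i),
        a (nb i) (ν j)
      = 2 * (((W i k : Fin n) : ℕ) : ℤ) - 2 * ((c i : ℕ) : ℤ) := by
    rw [hTeq]
    have hconst : ∀ j ∈ Finset.univ.filter
        (fun j : Fin n => c i ≤ (j : ℕ) ∧ (j : ℕ) < ((W i k : Fin n) : ℕ)),
        a (nb i) (ν j) = 2 := by
      intro j hj
      simp only [Finset.mem_filter, Finset.mem_univ, true_and] at hj
      have hjb : (j : ℕ) < c (i + 1) := lt_trans hj.2 hWik.2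
      rw [hν i hi j hj.1 hjb, ha]
    rw [Finset.sum_congr rfl hconst, Finset.sum_const, nsmul_eq_mul, hcard2]
    have h1 := hWik.1
    omega
  simp only [Nfun, hνk, hνWk]
  rw [hsplit1, hsplit2, hlow, hSH, hTH]
  push_cast
  ring
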